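/- Let γ ∈ F_{q^m}\F_q, and let g, h ∈ F_{q^m}^n. Let a, b, c, d ∈ F_q with ad − bc ≠ 0 and let δ ∈ F_{q^m} satisfy γ = (aδ + b)/(cδ + d). Then for every i ≥ 0, the F_{q^m}-span of g^{[i]} + γ h^{[i]} equals the F_{q^m}-span of (dg + bh)^{[i]} + δ (cg + ah)^{[i]}. In particular the code spanned by { g^{[i]} + γ h^{[i]} : i = 0,...,n−k−1 } equals the code spanned by { (dg+bh)^{[i]} + δ (cg+ah)^{[i]} : i = 0,...,n−k−1 }. -/
import Mathlib


open Module Polynomial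

def frobV {L : Type*} [Field L] (q s : ℕ) {n : ℕ} (v : Fin n → L) : Fin n → L :=
  fun i => v i ^ q ^ s

/-- The Gabidulin code of dimension `k` with support vector `a`: evaluations of
`q`-polynomials of `q`-degree `< k`, i.e. the span of the Frobenius powers of `a`. -/
def gab {L : Type*} [Field L] (q k : ℕ) {n : ℕ} (a : Fin n → L) : Submodule L (Fin n → L) :=
  Submodule.span L {v : Fin n → L | ∃ j < k, v = frobV q j a}

/-- Componentwise `q^s`-power Frobenius image of a code. -/
def frobCode {L : Type*} [Field L] (q s : ℕ) {n : ℕ} (C : Submodule L (Fin n → L)) :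
    Submodule L (Fin n → L) :=
  Submodule.span L (frobV q s '' (C : Set (Fin n → L)))

/-- Dual code with respect to the standard bilinear form. -/
def dualCode {L : Type*} [Field L] {n : ℕ} (C : Submodule L (Fin n → L)) :
    Submodule L (Fin n → L) where
  carrier := {x | ∀ c ∈ C, ∑ i, x i * c i = 0}
  add_mem' := by
    intro a b ha hb c hc
    simp only [Set.mem_setOf_eq] at *
    simp [add_mul, Finset.sum_add_distrib, ha c hc, hb c hc]
  zero_mem' := by intro c hc; simp
  smul_mem' := by
    intro r x hx c hc
    simp only [Set.mem_setOf_eq] at *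
    simp [smul_eq_mul, mul_assoc, ← Finset.mul_sum, hx c hc]

set_option maxHeartbeats 1000000 in
/-- Action of `PGL₂(F_q)` on triples `(γ, g, h)`: if `γ = (aδ+b)/(cδ+d)` with
`a, b, c, d ∈ F_q`, `ad - bc ≠ 0`, then for every `i` the span of `g^{[i]} + γ h^{[i]}`
equals the span of `(dg+bh)^{[i]} + δ (cg+ah)^{[i]}`, and the two codes spanned by these
vectors for `i = 0, …, n-k-1` coincide. -/
theorem pgl2_action_on_triples {K L : Type*} [Field K] [Fintype K] [Field L] [Fintype L]
    [Algebra K L] (n k : ℕ) (g h : Fin n → L) (γ δ : L) (a b c d : K)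
    (had : a * d - b * c ≠ 0)
    (hγF : γ ∉ Set.range (algebraMap K L))
    (hcd : algebraMap K L c * δ + algebraMap K L d ≠ 0)
    (hγ : γ = (algebraMap K L a * δ + algebraMap K L b)
              / (algebraMap K L c * δ + algebraMap K L d)) :
    (∀ i : ℕ,
      Submodule.span L {frobV (Fintype.card K) i g + γ • frobV (Fintype.card K) i h}
        = Submodule.span L
            {frobV (Fintype.card K) i (d • g + b • h)
              + δ • frobV (Fintype.card K) i (c • g + a • h)}) ∧
    Submodule.span L
        {v : Fin n → L | ∃ i < n - k,
          v = frobV (Fintype.card K) i g + γ • frobV (Fintype.card K) i h}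
      = Submodule.span L
        {v : Fin n → L | ∃ i < n - k,
          v = frobV (Fintype.card K) i (d • g + b • h)
                + δ • frobV (Fintype.card K) i (c • g + a • h)} := by
  set q := Fintype.card K with hq
  -- additivity of x ↦ x ^ q ^ i on L
  have hpadd : ∀ (i : ℕ) (x y : L), (x + y) ^ q ^ i = x ^ q ^ i + y ^ q ^ i := by
    set p := ringChar K with hpdef
    haveI : CharP K p := ringChar.charP K
    obtain ⟨f, hp, hcard⟩ := FiniteField.card K p
    haveI : Fact p.Prime := ⟨hp⟩
    haveI : CharP L p := charP_of_injective_algebraMap (algebraMap K L).injective p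
    intro i x y
    rw [hq, hcard, ← pow_mul, add_pow_char_pow]
  have hfix : ∀ (i : ℕ) (r : K), (algebraMap K L r) ^ q ^ i = algebraMap K L r := by
    intro i r
    rw [← map_pow, FiniteField.pow_card_pow]
  have hγ' : γ * (algebraMap K L c * δ + algebraMap K L d)
      = algebraMap K L a * δ + algebraMap K L b := by
    rw [hγ, div_mul_cancel₀ _ hcd]
  have key : ∀ i, frobV q i (d • g + b • h) + δ • frobV q i (c • g + a • h)
      = (algebraMap K L c * δ + algebraMap K L d) • (frobV q i g + γ • frobV q i h) := by
    intro i
    funext j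
    simp only [frobV, Pi.add_apply, Pi.smul_apply, smul_eq_mul]
    simp only [Algebra.smul_def]
    rw [hpadd, hpadd, mul_pow, mul_pow, mul_pow, mul_pow, hfix, hfix, hfix, hfix]
    linear_combination (-(h j ^ q ^ i)) * hγ'
  have htu : IsUnit (algebraMap K L c * δ + algebraMap K L d) := isUnit_iff_ne_zero.mpr hcd
  constructor
  · intro i
    rw [show ({frobV q i (d • g + b • h) + δ • frobV q i (c • g + a • h)} : Set (Fin n → L))
        = {(algebraMap K L c * δ + algebraMap K L d) • (frobV q i g + γ • frobV q i h)} by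
          rw [key i]]
    exact (Submodule.span_singleton_smul_eq htu _).symm
  · apply le_antisymm <;> rw [Submodule.span_le] <;> rintro v ⟨i, hi, rfl⟩
    · have hmem : frobV q i (d • g + b • h) + δ • frobV q i (c • g + a • h)
          ∈ Submodule.span L {v : Fin n → L | ∃ i < n - k,
            v = frobV q i (d • g + b • h) + δ • frobV q i (c • g + a • h)} :=
        Submodule.subset_span ⟨i, hi, rfl⟩
      have := Submodule.smul_mem _ (algebraMap K L c * δ + algebraMap K L d)⁻¹ hmem
      rwa [key i, smul_smul, inv_mul_cancel₀ hcd, one_smul] at this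
    · rw [key i]
      exact Submodule.smul_mem _ _ (Submodule.subset_span ⟨i, hi, rfl⟩)
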